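/- Let A be a unital normed algebra over ℂ that is finite-dimensional as a complex vector space. Then the set of invertible elements of A is path-connected. -/
import Mathlib

lemma aux_isUnit_iff {A : Type*} [NormedRing A] [NormedAlgebra ℂ A]
    [FiniteDimensional ℂ A] (x : A) :
    IsUnit x ↔ LinearMap.det (LinearMap.mulLeft ℂ x) ≠ 0 := by
  constructor
  · rintro ⟨u, rfl⟩
    have h1 : IsUnit (LinearMap.mulLeft ℂ (u : A)) := by
      refine ⟨⟨_, LinearMap.mulLeft ℂ ((u⁻¹ : Aˣ) : A), ?_, ?_⟩, rfl⟩ <;>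
        ext y <;> simp [mul_assoc]
    exact (LinearMap.isUnit_det _ h1).ne_zero
  · intro hd
    have hb : Function.Bijective (LinearMap.mulLeft ℂ x) :=
      (LinearMap.equivOfDetNeZero _ hd).bijective
    obtain ⟨b, hb1⟩ := hb.2 1
    simp only [LinearMap.mulLeft_apply] at hb1
    refine ⟨⟨x, b, hb1, ?_⟩, rfl⟩
    apply hb.1
    simp only [LinearMap.mulLeft_apply, ← mul_assoc, hb1, one_mul, mul_one]

open Polynomial in
/-- The set of `z` where the segment between two units fails to be a unit is countable. -/
lemma aux_countable {A : Type*} [NormedRing A] [NormedAlgebra ℂ A]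
    [FiniteDimensional ℂ A] {a b : A} (ha : IsUnit a) (_hb : IsUnit b) :
    {z : ℂ | ¬ IsUnit ((1 - z) • a + z • b)}.Countable := by
  classical
  set bA := Module.finBasis ℂ A with hbA
  set M := LinearMap.toMatrix bA bA (LinearMap.mulLeft ℂ a) with hM
  set N := LinearMap.toMatrix bA bA (LinearMap.mulLeft ℂ b) with hN
  set p : ℂ[X] := (((1 : ℂ[X]) - X) • (M.map C) + (X : ℂ[X]) • (N.map C)).det with hp
  have key : ∀ z : ℂ, p.eval z
      = LinearMap.det (LinearMap.mulLeft ℂ ((1 - z) • a + z • b)) := by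
    intro z
    have hmul : LinearMap.mulLeft ℂ ((1 - z) • a + z • b)
        = (1 - z) • LinearMap.mulLeft ℂ a + z • LinearMap.mulLeft ℂ b := by
      ext y; simp [add_mul, smul_mul_assoc]
    rw [hmul, ← LinearMap.det_toMatrix bA, map_add, map_smul, map_smul, ← hM, ← hN]
    have : p.eval z = (evalRingHom z) p := rfl
    rw [this, hp, RingHom.map_det]
    congr 1
    ext i j
    simp [Matrix.map_apply]
    ring
  have hp0 : p ≠ 0 := by
    intro h
    apply (aux_isUnit_iff a).mp ha
    have h0 := key 0
    rw [h] at h0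
    simpa using h0.symm
  refine (Polynomial.finite_setOf_isRoot hp0).countable.mono ?_
  intro z hz
  simp only [Set.mem_setOf_eq] at hz ⊢
  rw [aux_isUnit_iff, not_not] at hz
  show p.eval z = 0
  rw [key z, hz]

/-- In a finite-dimensional unital normed algebra over `ℂ`, the
set of invertible elements is path-connected. -/
theorem stmt8 (A : Type*) [NormedRing A] [NormedAlgebra ℂ A]
    [FiniteDimensional ℂ A] :
    IsPathConnected {a : A | IsUnit a} := by
  refine ⟨1, isUnit_one, ?_⟩
  intro y hy
  set g : ℂ → A := fun z => (1 - z) • (1 : A) + z • y with hgdef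
  have hg : Continuous g := by fun_prop
  set S := {z : ℂ | ¬ IsUnit ((1 - z) • (1 : A) + z • y)} with hSdef
  have hS : S.Countable := aux_countable isUnit_one hy
  have hpc : IsPathConnected Sᶜ :=
    hS.isPathConnected_compl_of_one_lt_rank
      (by rw [Complex.rank_real_complex]; exact Cardinal.one_lt_two)
  have h0 : (0 : ℂ) ∈ Sᶜ := by simp [hSdef]
  have h1 : (1 : ℂ) ∈ Sᶜ := by simpa [hSdef] using hy
  obtain ⟨γ, hγ⟩ := hpc.joinedIn 0 h0 1 h1
  have hJ : JoinedIn {a : A | IsUnit a} (g 0) (g 1) := by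
    refine ⟨γ.map hg, fun t => ?_⟩
    have := hγ t
    simp only [hSdef, Set.mem_compl_iff, Set.mem_setOf_eq, not_not] at this
    simpa [hgdef] using this
  simpa [hgdef] using hJ
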